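/- Let t be an odd positive integer. Then there are infinitely many primes p such that p ≡ 2 (mod t), p ≡ 3 (mod 4), and 2t is a quadratic residue modulo p. -/

import Mathlib

open Nat

theorem stmt_18 (t : ℕ) (ht : 0 < t) (hodd : Odd t) :
    {p : ℕ | p.Prime ∧ (p : ℤ) ≡ 2 [ZMOD (t : ℤ)] ∧ p % 4 = 3 ∧
      ∃ x : ℤ, x ^ 2 ≡ 2 * (t : ℤ) [ZMOD (p : ℤ)]}.Infinite := by
  have ht2 : t % 2 = 1 := Nat.odd_iff.mp hodd
  -- choose residue r mod 8
  set r : ℕ := if t % 8 = 1 ∨ t % 8 = 3 then 7 else 3 with hr_def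
  have hr : r = 7 ∨ r = 3 := by unfold r; split <;> simp
  -- the residue class a mod 8*t
  set a : ℕ := 2 + t ^ 2 * (r - 2) with ha_def
  haveI : NeZero (8 * t) := ⟨by positivity⟩
  -- a mod 8 = r
  have ht8sq : t ^ 2 % 8 = 1 := by
    have : t % 8 = 1 ∨ t % 8 = 3 ∨ t % 8 = 5 ∨ t % 8 = 7 := by omega
    have h2 : t ^ 2 % 8 = (t % 8) ^ 2 % 8 := by
      rw [Nat.pow_mod]
    rcases this with h | h | h | h <;> rw [h2, h] <;> rfl
  have ha8 : a % 8 = r := by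
    show (2 + t ^ 2 * (r - 2)) % 8 = r
    rw [Nat.add_mod, Nat.mul_mod, ht8sq]
    rcases hr with h | h <;> rw [h] <;> rfl
  have hat : a % t = 2 % t := by
    rw [ha_def]
    conv_rhs => rw [← Nat.add_mul_mod_self_left 2 t (t * (r - 2))]
    ring_nf
  -- coprimality
  have hcop : Nat.Coprime a (8 * t) := by
    have h8 : Nat.Coprime a 8 := by
      have : a % 2 = 1 := by omega
      have h2 : Nat.Coprime 2 a :=
        (Nat.prime_two.coprime_iff_not_dvd).mpr (by omega)
      simpa using h2.symm.pow_right 3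
    have htc : Nat.Coprime a t := by
      have : Nat.gcd a t = Nat.gcd 2 t := by
        rw [Nat.gcd_comm a t, Nat.gcd_rec t a, hat, ← Nat.gcd_rec, Nat.gcd_comm]
      unfold Nat.Coprime
      rw [this]
      exact (Nat.prime_two.coprime_iff_not_dvd).mpr (by omega)
    exact Nat.Coprime.mul_right h8 htc
  have hunit : IsUnit ((a : ZMod (8 * t))) := (ZMod.isUnit_iff_coprime a (8 * t)).mpr hcop
  have hinf := Nat.infinite_setOfPred_prime_and_eq_mod hunit
  apply hinf.mono
  rintro p ⟨hp, hpa⟩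
  haveI : Fact p.Prime := ⟨hp⟩
  have hmod : p ≡ a [MOD 8 * t] := (ZMod.natCast_eq_natCast_iff p a (8 * t)).mp hpa
  -- p mod 8 = r
  have hp8 : p % 8 = r := by
    have h := (hmod.of_dvd (dvd_mul_right 8 t) : p ≡ a [MOD 8])
    have := h
    unfold Nat.ModEq at this
    rw [this, ha8]
  have hp4 : p % 4 = 3 := by
    have : p % 4 = p % 8 % 4 := (Nat.mod_mod_of_dvd p (by norm_num)).symm
    rw [this, hp8]; rcases hr with h | h <;> rw [h] <;> rfl
  -- p ≡ 2 mod t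
  have hpt : p ≡ 2 [MOD t] := by
    have h := (hmod.of_dvd (dvd_mul_left t 8) : p ≡ a [MOD t])
    unfold Nat.ModEq at h ⊢
    rw [h, hat]
  have hptZ : (p : ℤ) ≡ 2 [ZMOD (t : ℤ)] := by
    have := hpt
    unfold Nat.ModEq at this
    unfold Int.ModEq
    push_cast
    exact_mod_cast congrArg (Nat.cast : ℕ → ℤ) this
  refine ⟨hp, hptZ, hp4, ?_⟩
  -- p is coprime to 8t, hence odd and not dividing 2t
  have hpcop : Nat.Coprime p (8 * t) := by
    have : Nat.gcd (8 * t) p = Nat.gcd (8 * t) a := by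
      rw [Nat.gcd_rec (8*t) p, hmod, ← Nat.gcd_rec]
    unfold Nat.Coprime
    rw [Nat.gcd_comm, this, Nat.gcd_comm]
    exact hcop
  have hpodd : Odd p := by
    rw [Nat.odd_iff]
    have h8 : p % 8 % 2 = p % 2 := Nat.mod_mod_of_dvd p (by norm_num)
    rw [← h8, hp8]; rcases hr with h | h <;> rw [h] <;> rfl
  have hpndvd : ¬ (p : ℤ) ∣ 2 * (t : ℤ) := by
    intro hd
    have hd' : p ∣ 2 * t := by exact_mod_cast hd
    have : p ∣ 8 * t := hd'.trans (by exact Nat.mul_dvd_mul_right (by norm_num) t)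
    have h1 : p ∣ 1 := hpcop ▸ Nat.dvd_gcd dvd_rfl this
    have := Nat.le_of_dvd one_pos h1
    omega
  have ha0 : ((2 * (t : ℤ) : ℤ) : ZMod p) ≠ 0 := by
    rw [Ne, ZMod.intCast_zmod_eq_zero_iff_dvd]
    exact_mod_cast hpndvd
  -- Legendre symbol computation
  have hleg : legendreSym p (2 * (t : ℤ)) = 1 := by
    rw [jacobiSym.legendreSym.to_jacobiSym, jacobiSym.mul_left,
      jacobiSym.at_two hpodd]
    have hrecip : jacobiSym (t : ℤ) p = (if t % 4 = 1 then 1 else -1) * jacobiSym (p : ℤ) t := by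
      rcases Nat.odd_mod_four_iff.mp ht2 with h4 | h4
      · rw [jacobiSym.quadratic_reciprocity_one_mod_four h4 hpodd]; simp [h4]
      · rw [jacobiSym.quadratic_reciprocity_three_mod_four h4 hp4]
        rw [h4]; norm_num
    have hjp : jacobiSym (p : ℤ) t = jacobiSym 2 t := by
      apply jacobiSym.mod_left'
      have := hpt
      unfold Nat.ModEq at this
      have h2 : ((p % t : ℕ) : ℤ) = ((2 % t : ℕ) : ℤ) := by exact_mod_cast congrArg (fun n : ℕ => (n : ℤ)) this
      push_cast at h2
      exact h2
    rw [hrecip, hjp, jacobiSym.at_two hodd,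
      ZMod.χ₈_nat_eq_if_mod_eight p, ZMod.χ₈_nat_eq_if_mod_eight t, hp8]
    have ht84 : t % 4 = t % 8 % 4 := (Nat.mod_mod_of_dvd t (by norm_num)).symm
    have h8cases : t % 8 = 1 ∨ t % 8 = 3 ∨ t % 8 = 5 ∨ t % 8 = 7 := by omega
    rcases h8cases with h | h | h | h <;>
      · rw [hr_def] <;> simp [h, ht84, Nat.odd_iff.mp hpodd, Nat.odd_iff.mp hodd]
  have hsq : IsSquare (((2 * (t : ℤ)) : ℤ) : ZMod p) :=
    (legendreSym.eq_one_iff p ha0).mp hleg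
  obtain ⟨y, hy⟩ := hsq
  refine ⟨(y.val : ℤ), ?_⟩
  rw [← ZMod.intCast_eq_intCast_iff]
  push_cast at hy ⊢
  rw [ZMod.natCast_val, ZMod.cast_id, hy]
  ring
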